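/- Let n ≥ 2, let K, L ∈ 𝒦₀(ℝⁿ), and let q ∈ ℝ with 0 < |q| ≤ n. Then |Ṽ_q(K) + Ṽ_q(L) − 2·Ṽ_q(K∩L)| = V_{|q|}(Dₙ) · ∫_{S^{n−1}} |ρ_K(u)^q − ρ_L(u)^q| dσ(u) = (|q|·V_{|q|}(Dₙ)/(n·|Dₙ|)) · ∫_{K△L} ‖x‖^{q−n} dx. Moreover, if q > 0 then the quantity Ṽ_q(K) + Ṽ_q(L) − 2·Ṽ_q(K∩L) is itself nonnegative, so the absolute value may be omitted. -/

import Mathlib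

open MeasureTheory

/-- The uniform (rotation invariant) probability measure `σ` on the unit sphere
`S^{n-1} ⊆ ℝⁿ`. -/
noncomputable def sphereProb (n : ℕ) :
    Measure (Metric.sphere (0 : EuclideanSpace ℝ (Fin n)) 1) :=
  ((volume : Measure (EuclideanSpace ℝ (Fin n))).toSphere Set.univ)⁻¹ •
    (volume : Measure (EuclideanSpace ℝ (Fin n))).toSphere

/-- The radial function `ρ_K(u) = max {r : r • u ∈ K}` of a set `K ⊆ ℝⁿ`. -/
noncomputable def radialFn {n : ℕ} (K : Set (EuclideanSpace ℝ (Fin n)))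
    (u : EuclideanSpace ℝ (Fin n)) : ℝ :=
  sSup {r : ℝ | r • u ∈ K}

/-- `V_s(Dₙ) = π^{s/2}·Γ(n+1)·Γ((n-s)/2+1) / (Γ(s+1)·Γ(n-s+1)·Γ(n/2+1))`, the analytic
extension of the `s`-th intrinsic volume of the unit ball `Dₙ` to real `s ∈ [0,n]`. -/
noncomputable def Vball (n : ℕ) (s : ℝ) : ℝ :=
  Real.pi ^ (s / 2) * Real.Gamma ((n : ℝ) + 1) * Real.Gamma (((n : ℝ) - s) / 2 + 1) /
    (Real.Gamma (s + 1) * Real.Gamma ((n : ℝ) - s + 1) * Real.Gamma ((n : ℝ) / 2 + 1))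

/-- The `q`-th dual volume `Ṽ_q(K) = V_{|q|}(Dₙ) ∫_{S^{n-1}} ρ_K(u)^q dσ(u)`
for `|q| ≤ n`. -/
noncomputable def dualVol (n : ℕ) (q : ℝ) (K : Set (EuclideanSpace ℝ (Fin n))) : ℝ :=
  Vball n |q| * ∫ u : Metric.sphere (0 : EuclideanSpace ℝ (Fin n)) 1,
    radialFn K ↑u ^ q ∂(sphereProb n)

open Metric Set




variable {n : ℕ}



section radial

variable {K L : Set (EuclideanSpace ℝ (Fin n))}
variable (hKcp : IsCompact K) (hKcv : Convex ℝ K) (hKint : 0 ∈ interior K)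

include hKcp hKcv hKint in
lemma smul_mem_iff_le_inv_gauge {u : EuclideanSpace ℝ (Fin n)} (hu : u ≠ 0) {r : ℝ}
    (hr : 0 ≤ r) : r • u ∈ K ↔ r ≤ (gauge K u)⁻¹ := by
  have hnhds : K ∈ nhds (0 : EuclideanSpace ℝ (Fin n)) := mem_interior_iff_mem_nhds.1 hKint
  have hg : 0 < gauge K u := (gauge_pos (absorbent_nhds_zero hnhds)
    (NormedSpace.isVonNBounded_of_isBounded _ hKcp.isBounded)).2 hu
  have h1 : r • u ∈ K ↔ gauge K (r • u) ≤ 1 := by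
    rw [gauge_le_one_iff_mem_closure hKcv hnhds, hKcp.isClosed.closure_eq]
  rw [h1, gauge_smul_of_nonneg hr, smul_eq_mul, ← le_div_iff₀ hg, one_div]

include hKcp hKcv hKint in
lemma radial_isGreatest {u : EuclideanSpace ℝ (Fin n)} (hu : u ≠ 0) :
    IsGreatest {r : ℝ | r • u ∈ K} (gauge K u)⁻¹ := by
  have hnhds : K ∈ nhds (0 : EuclideanSpace ℝ (Fin n)) := mem_interior_iff_mem_nhds.1 hKint
  have hg : 0 < gauge K u := (gauge_pos (absorbent_nhds_zero hnhds)
    (NormedSpace.isVonNBounded_of_isBounded _ hKcp.isBounded)).2 hu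
  constructor
  · exact (smul_mem_iff_le_inv_gauge hKcp hKcv hKint hu (by positivity)).2 le_rfl
  · intro r hr
    rcases le_or_gt 0 r with h0 | h0
    · exact (smul_mem_iff_le_inv_gauge hKcp hKcv hKint hu h0).1 hr
    · exact h0.le.trans (by positivity)

include hKcp hKcv hKint in
lemma radialFn_eq_inv_gauge {u : EuclideanSpace ℝ (Fin n)} (hu : u ≠ 0) :
    radialFn K u = (gauge K u)⁻¹ :=
  (radial_isGreatest hKcp hKcv hKint hu).csSup_eq

include hKcp hKcv hKint in
lemma radialFn_pos {u : EuclideanSpace ℝ (Fin n)} (hu : u ≠ 0) : 0 < radialFn K u := by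
  rw [radialFn_eq_inv_gauge hKcp hKcv hKint hu]
  have hnhds : K ∈ nhds (0 : EuclideanSpace ℝ (Fin n)) := mem_interior_iff_mem_nhds.1 hKint
  have hg : 0 < gauge K u := (gauge_pos (absorbent_nhds_zero hnhds)
    (NormedSpace.isVonNBounded_of_isBounded _ hKcp.isBounded)).2 hu
  positivity

include hKcp hKcv hKint in
lemma smul_mem_iff_le_radialFn {u : EuclideanSpace ℝ (Fin n)} (hu : u ≠ 0) {r : ℝ}
    (hr : 0 ≤ r) : r • u ∈ K ↔ r ≤ radialFn K u := by
  rw [radialFn_eq_inv_gauge hKcp hKcv hKint hu]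
  exact smul_mem_iff_le_inv_gauge hKcp hKcv hKint hu hr

variable (hLcp : IsCompact L) (hLcv : Convex ℝ L) (hLint : 0 ∈ interior L)

include hKcp hKcv hKint hLcp hLcv hLint in
lemma radialFn_inter {u : EuclideanSpace ℝ (Fin n)} (hu : u ≠ 0) :
    radialFn (K ∩ L) u = min (radialFn K u) (radialFn L u) := by
  have hKL : IsGreatest {r : ℝ | r • u ∈ K ∩ L} (min (radialFn K u) (radialFn L u)) := by
    constructor
    · have h0 : (0:ℝ) ≤ min (radialFn K u) (radialFn L u) :=
        le_min (radialFn_pos hKcp hKcv hKint hu).le (radialFn_pos hLcp hLcv hLint hu).le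
      exact ⟨(smul_mem_iff_le_radialFn hKcp hKcv hKint hu h0).2 (min_le_left _ _),
        (smul_mem_iff_le_radialFn hLcp hLcv hLint hu h0).2 (min_le_right _ _)⟩
    · intro r hr
      exact le_min ((radial_isGreatest hKcp hKcv hKint hu).2 hr.1
          |>.trans_eq (radialFn_eq_inv_gauge hKcp hKcv hKint hu).symm)
        ((radial_isGreatest hLcp hLcv hLint hu).2 hr.2
          |>.trans_eq (radialFn_eq_inv_gauge hLcp hLcv hLint hu).symm)
  exact hKL.csSup_eq

include hKcp hKcv hKint in
lemma continuous_radialFn_sphere :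
    Continuous fun u : sphere (0 : EuclideanSpace ℝ (Fin n)) 1 => radialFn K ↑u := by
  have hnhds : K ∈ nhds (0 : EuclideanSpace ℝ (Fin n)) := mem_interior_iff_mem_nhds.1 hKint
  have h : ∀ u : sphere (0 : EuclideanSpace ℝ (Fin n)) 1, (u : EuclideanSpace ℝ (Fin n)) ≠ 0 :=
    fun u => ne_of_mem_sphere u.2 one_ne_zero
  have : (fun u : sphere (0 : EuclideanSpace ℝ (Fin n)) 1 => radialFn K ↑u)
      = fun u : sphere (0 : EuclideanSpace ℝ (Fin n)) 1 => (gauge K (↑u : EuclideanSpace ℝ (Fin n)))⁻¹ := by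
    funext u
    exact radialFn_eq_inv_gauge hKcp hKcv hKint (h u)
  rw [this]
  refine Continuous.inv₀ ((continuous_gauge hKcv hnhds).comp continuous_subtype_val) fun u => ?_
  exact ((gauge_pos (absorbent_nhds_zero hnhds)
    (NormedSpace.isVonNBounded_of_isBounded _ hKcp.isBounded)).2 (h u)).ne'

include hKcp hKcv hKint in
lemma radialFn_le_radius {R : ℝ} (hR : K ⊆ closedBall 0 R) {u : EuclideanSpace ℝ (Fin n)}
    (hu : ‖u‖ = 1) : radialFn K u ≤ R := by
  have hu0 : u ≠ 0 := by intro h; rw [h] at hu; simp at hu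
  have hmem : radialFn K u • u ∈ K := by
    have := (radial_isGreatest hKcp hKcv hKint hu0).1
    rwa [← radialFn_eq_inv_gauge hKcp hKcv hKint hu0] at this
  have := hR hmem
  rw [mem_closedBall_zero_iff, norm_smul, hu, mul_one, Real.norm_eq_abs] at this
  exact (le_abs_self _).trans this

end radial




lemma pt_dev {a b : ℝ} (ha : 0 < a) (hb : 0 < b) (q : ℝ) :
    a ^ q + b ^ q - 2 * min a b ^ q = (if 0 < q then 1 else -1) * |a ^ q - b ^ q| := by
  rcases le_total a b with hab | hab
  · rw [min_eq_left hab]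
    rcases lt_or_ge 0 q with hq | hq
    · have : a ^ q ≤ b ^ q := Real.rpow_le_rpow ha.le hab hq.le
      rw [if_pos hq, abs_sub_comm, abs_of_nonneg (by linarith)]; ring
    · have : b ^ q ≤ a ^ q := Real.rpow_le_rpow_of_nonpos ha hab hq
      rw [if_neg (not_lt.2 hq), abs_of_nonneg (by linarith)]; ring
  · rw [min_eq_right hab]
    rcases lt_or_ge 0 q with hq | hq
    · have : b ^ q ≤ a ^ q := Real.rpow_le_rpow hb.le hab hq.le
      rw [if_pos hq, abs_of_nonneg (by linarith)]; ring
    · have : a ^ q ≤ b ^ q := Real.rpow_le_rpow_of_nonpos hb hab hq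
      rw [if_neg (not_lt.2 hq), abs_sub_comm, abs_of_nonneg (by linarith)]; ring

lemma pt_sub {a b q : ℝ} (ha : 0 < a) (hb : 0 < b) (hq : q ≠ 0) :
    (max a b ^ q - min a b ^ q) / q = |a ^ q - b ^ q| / |q| := by
  rcases hq.lt_or_gt with hq' | hq'
  · rcases le_total a b with hab | hab
    · rw [max_eq_right hab, min_eq_left hab, abs_of_neg hq']
      have : b ^ q ≤ a ^ q := Real.rpow_le_rpow_of_nonpos ha hab hq'.le
      rw [abs_sub_comm, abs_of_nonpos (by linarith)]
      rw [div_eq_div_iff hq'.ne (by linarith : -q ≠ 0)]; ring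
    · rw [max_eq_left hab, min_eq_right hab, abs_of_neg hq']
      have : a ^ q ≤ b ^ q := Real.rpow_le_rpow_of_nonpos hb hab hq'.le
      rw [abs_of_nonpos (by linarith)]
      rw [div_eq_div_iff hq'.ne (by linarith : -q ≠ 0)]; ring
  · rcases le_total a b with hab | hab
    · rw [max_eq_right hab, min_eq_left hab, abs_of_pos hq']
      have : a ^ q ≤ b ^ q := Real.rpow_le_rpow ha.le hab hq'.le
      rw [abs_sub_comm, abs_of_nonneg (by linarith)]
    · rw [max_eq_left hab, min_eq_right hab, abs_of_pos hq']
      have : b ^ q ≤ a ^ q := Real.rpow_le_rpow hb.le hab hq'.le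
      rw [abs_of_nonneg (by linarith)]

lemma rpow_le_max {ε R t p : ℝ} (hε : 0 < ε) (h1 : ε ≤ t) (h2 : t ≤ R) :
    t ^ p ≤ max (ε ^ p) (R ^ p) := by
  rcases le_or_gt 0 p with hp | hp
  · exact le_max_of_le_right (Real.rpow_le_rpow (hε.trans_le h1).le h2 hp)
  · exact le_max_of_le_left (Real.rpow_le_rpow_of_nonpos hε h1 hp.le)



lemma Vball_pos {n : ℕ} {s : ℝ} (h0 : 0 ≤ s) (hn : s ≤ n) : 0 < Vball n s := by
  have g1 := Real.Gamma_pos_of_pos (show (0:ℝ) < (n : ℝ) + 1 by positivity)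
  have g2 := Real.Gamma_pos_of_pos (show (0:ℝ) < ((n:ℝ) - s) / 2 + 1 by nlinarith)
  have g3 := Real.Gamma_pos_of_pos (show (0:ℝ) < s + 1 by linarith)
  have g4 := Real.Gamma_pos_of_pos (show (0:ℝ) < (n:ℝ) - s + 1 by nlinarith)
  have g5 := Real.Gamma_pos_of_pos (show (0:ℝ) < (n:ℝ) / 2 + 1 by positivity)
  have hπ : (0:ℝ) < Real.pi ^ (s / 2) := Real.rpow_pos_of_pos Real.pi_pos _
  exact div_pos (by positivity) (by positivity)



lemma toSphere_univ_ne_top (n : ℕ) :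
    (volume : Measure (EuclideanSpace ℝ (Fin n))).toSphere Set.univ ≠ ⊤ :=
  measure_ne_top _ _

lemma toSphere_univ_eq (n : ℕ) (hn : n ≠ 0) :
    (volume : Measure (EuclideanSpace ℝ (Fin n))).toSphere Set.univ
      = n * volume (ball (0 : EuclideanSpace ℝ (Fin n)) 1) := by
  rw [Measure.toSphere_apply_univ, finrank_euclideanSpace_fin]

lemma toSphere_univ_ne_zero (n : ℕ) (hn : n ≠ 0) :
    (volume : Measure (EuclideanSpace ℝ (Fin n))).toSphere Set.univ ≠ 0 := by
  rw [toSphere_univ_eq n hn]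
  exact mul_ne_zero (by simpa using hn) (measure_ball_pos _ _ one_pos).ne'

instance sphereProb_finite (n : ℕ) : IsFiniteMeasure (sphereProb n) := by
  constructor
  rw [sphereProb, Measure.smul_apply, smul_eq_mul]
  rcases eq_or_ne ((volume : Measure (EuclideanSpace ℝ (Fin n))).toSphere Set.univ) 0 with h | h
  · simp [h]
  · rw [ENNReal.inv_mul_cancel h (toSphere_univ_ne_top n)]
    exact ENNReal.one_lt_top

lemma integrable_sphereProb {n : ℕ} {f : Metric.sphere (0 : EuclideanSpace ℝ (Fin n)) 1 → ℝ}
    (hf : Continuous f) : Integrable f (sphereProb n) :=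
  hf.integrable_of_hasCompactSupport
    (IsCompact.of_isClosed_subset isCompact_univ (isClosed_tsupport f) (subset_univ _))

lemma integral_toSphere_eq (n : ℕ) (hn : n ≠ 0)
    (f : Metric.sphere (0 : EuclideanSpace ℝ (Fin n)) 1 → ℝ) :
    ∫ u, f u ∂((volume : Measure (EuclideanSpace ℝ (Fin n))).toSphere)
      = ((n : ℝ) * (volume (ball (0 : EuclideanSpace ℝ (Fin n)) 1)).toReal) *
        ∫ u, f u ∂(sphereProb n) := by
  set c := (volume : Measure (EuclideanSpace ℝ (Fin n))).toSphere Set.univ with hc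
  have h1 : ∫ u, f u ∂(sphereProb n) = (c⁻¹).toReal • ∫ u, f u ∂((volume : Measure (EuclideanSpace ℝ (Fin n))).toSphere) := by
    rw [sphereProb, integral_smul_measure]
  have hc0 : c ≠ 0 := toSphere_univ_ne_zero n hn
  have hct : c ≠ ⊤ := toSphere_univ_ne_top n
  have hcr : c.toReal ≠ 0 := ENNReal.toReal_ne_zero.2 ⟨hc0, hct⟩
  have h2 : ((n : ℝ) * (volume (ball (0 : EuclideanSpace ℝ (Fin n)) 1)).toReal) = c.toReal := by
    rw [hc, toSphere_univ_eq n hn, ENNReal.toReal_mul]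
    simp
  rw [h1, h2, ENNReal.toReal_inv, smul_eq_mul]
  field_simp

lemma ball_closedBall_volume (n : ℕ) [Nontrivial (EuclideanSpace ℝ (Fin n))] :
    volume (closedBall (0 : EuclideanSpace ℝ (Fin n)) 1)
      = volume (ball (0 : EuclideanSpace ℝ (Fin n)) 1) := by
  exact MeasureTheory.Measure.addHaar_closedBall_eq_addHaar_ball volume 0 1






lemma inner_integral {n : ℕ} (hn : 1 ≤ n) {m M q : ℝ} (hm : 0 < m) (hmM : m ≤ M) (hq : q ≠ 0) :
    ∫ r : Set.Ioi (0:ℝ), (Set.Ioc m M).indicator (fun t : ℝ => t ^ (q - (n:ℝ))) r.1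
        ∂(MeasureTheory.Measure.volumeIoiPow (n - 1))
      = (M ^ q - m ^ q) / q := by
  rw [Measure.volumeIoiPow]
  simp only [ENNReal.ofReal]
  rw [integral_withDensity_eq_integral_smul
    ((measurable_subtype_coe.pow_const _).real_toNNReal),
    integral_subtype_comap measurableSet_Ioi
      (fun a : ℝ => (a ^ (n-1)).toNNReal • (Set.Ioc m M).indicator (fun t : ℝ => t ^ (q - (n:ℝ))) a)]
  have hcongr : ∀ r ∈ Set.Ioi (0:ℝ),
      (r ^ (n-1)).toNNReal • (Set.Ioc m M).indicator (fun t : ℝ => t ^ (q - (n:ℝ))) r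
        = (Set.Ioc m M).indicator (fun t : ℝ => t ^ (q - 1)) r := by
    intro r hr
    have hr0 : (0:ℝ) < r := hr
    by_cases hmem : r ∈ Set.Ioc m M
    · rw [Set.indicator_of_mem hmem, Set.indicator_of_mem hmem, NNReal.smul_def,
        Real.coe_toNNReal _ (pow_nonneg hr0.le _)]
      have : (r : ℝ) ^ (n-1) = r ^ ((n:ℝ) - 1) := by
        rw [← Real.rpow_natCast r (n-1), Nat.cast_sub hn, Nat.cast_one]
      rw [this, smul_eq_mul, ← Real.rpow_add hr0]
      ring_nf
    · rw [Set.indicator_of_notMem hmem, Set.indicator_of_notMem hmem, smul_zero]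
  rw [setIntegral_congr_fun measurableSet_Ioi hcongr,
    setIntegral_indicator measurableSet_Ioc,
    show Set.Ioi (0:ℝ) ∩ Set.Ioc m M = Set.Ioc m M from
      Set.inter_eq_self_of_subset_right (fun x hx => lt_trans hm hx.1),
    ← intervalIntegral.integral_of_le hmM,
    integral_rpow (Or.inr ⟨by intro h; apply hq; linarith, by
      rw [Set.uIcc_of_le hmM]; intro h; exact absurd h.1 (by linarith)⟩)]
  rw [sub_add_cancel]

section sd
variable {n : ℕ} {K L : Set (EuclideanSpace ℝ (Fin n))}
variable (hKcp : IsCompact K) (hKcv : Convex ℝ K) (hKint : 0 ∈ interior K)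
variable (hLcp : IsCompact L) (hLcv : Convex ℝ L) (hLint : 0 ∈ interior L)

include hKcp hKcv hKint hLcp hLcv hLint in
lemma smul_mem_symmDiff_iff {u : EuclideanSpace ℝ (Fin n)} (hu : u ≠ 0) {r : ℝ} (hr : 0 ≤ r) :
    r • u ∈ symmDiff K L ↔
      r ∈ Set.Ioc (min (radialFn K u) (radialFn L u)) (max (radialFn K u) (radialFn L u)) := by
  rw [Set.mem_symmDiff, smul_mem_iff_le_radialFn hKcp hKcv hKint hu hr,
    smul_mem_iff_le_radialFn hLcp hLcv hLint hu hr, Set.mem_Ioc]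
  constructor
  · rintro (⟨h1, h2⟩ | ⟨h1, h2⟩) <;> push_neg at h2
    · exact ⟨(min_le_right _ _).trans_lt h2, h1.trans (le_max_left _ _)⟩
    · exact ⟨(min_le_left _ _).trans_lt h2, h1.trans (le_max_right _ _)⟩
  · rintro ⟨h1, h2⟩
    rcases le_total (radialFn K u) (radialFn L u) with h | h
    · rw [min_eq_left h] at h1
      rw [max_eq_right h] at h2
      exact Or.inr ⟨h2, not_le.2 h1⟩
    · rw [min_eq_right h] at h1
      rw [max_eq_left h] at h2
      exact Or.inl ⟨h2, not_le.2 h1⟩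
end sd

section polar


variable {n : ℕ} {K L : Set (EuclideanSpace ℝ (Fin n))}

lemma polar_symmDiff (hn : 2 ≤ n)
    (hKcp : IsCompact K) (hKcv : Convex ℝ K) (hKint : 0 ∈ interior K)
    (hLcp : IsCompact L) (hLcv : Convex ℝ L) (hLint : 0 ∈ interior L)
    {q : ℝ} (hq : q ≠ 0) :
    ∫ x in symmDiff K L, ‖x‖ ^ (q - (n:ℝ))
      = ((n:ℝ) * (volume (ball (0 : EuclideanSpace ℝ (Fin n)) 1)).toReal) *
        ∫ u : Metric.sphere (0 : EuclideanSpace ℝ (Fin n)) 1,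
          (max (radialFn K ↑u) (radialFn L ↑u) ^ q
            - min (radialFn K ↑u) (radialFn L ↑u) ^ q) / q ∂(sphereProb n) := by
  haveI : NeZero n := ⟨by omega⟩
  have hdim : Module.finrank ℝ (EuclideanSpace ℝ (Fin n)) = n := finrank_euclideanSpace_fin
  have hKm : MeasurableSet K := hKcp.isClosed.measurableSet
  have hLm : MeasurableSet L := hLcp.isClosed.measurableSet
  have hSDm : MeasurableSet (symmDiff K L) := by
    rw [Set.symmDiff_def]
    exact (hKm.diff hLm).union (hLm.diff hKm)
  set f : EuclideanSpace ℝ (Fin n) → ℝ :=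
    (symmDiff K L).indicator (fun x => ‖x‖ ^ (q - (n:ℝ))) with hf
  -- measurability of f
  obtain ⟨ε, hε, hball⟩ : ∃ ε > 0, ball (0 : EuclideanSpace ℝ (Fin n)) ε ⊆ K ∩ L := by
    have h0 : (0 : EuclideanSpace ℝ (Fin n)) ∈ interior (K ∩ L) := by
      rw [interior_inter]; exact ⟨hKint, hLint⟩
    rcases Metric.isOpen_iff.1 isOpen_interior 0 h0 with ⟨ε, hε, h⟩
    exact ⟨ε, hε, h.trans interior_subset⟩
  obtain ⟨R, hR⟩ := (hKcp.union hLcp).isBounded.subset_closedBall 0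
  have hfmeas : AEStronglyMeasurable f volume := by
    have h1 : f = (symmDiff K L).indicator
        (fun x => Real.exp (Real.log ‖x‖ * (q - (n:ℝ)))) := by
      apply Set.indicator_congr
      intro x hx
      have hx0 : (0:ℝ) < ‖x‖ := by
        rcases Set.mem_symmDiff.1 hx with ⟨h, h'⟩ | ⟨h, h'⟩
        · refine norm_pos_iff.2 fun h0 => ?_
          subst h0
          exact h' (hball (mem_ball_self hε)).2
        · refine norm_pos_iff.2 fun h0 => ?_
          subst h0
          exact h' (hball (mem_ball_self hε)).1
      exact Real.rpow_def_of_pos hx0 _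
    rw [h1]
    exact ((Real.measurable_exp.comp
      ((measurable_norm.log).mul_const _)).indicator hSDm).aestronglyMeasurable
  set C := max (ε ^ (q - (n:ℝ))) (R ^ (q - (n:ℝ))) with hCdef
  have hC : 0 ≤ C := le_trans (Real.rpow_pos_of_pos hε _).le (le_max_left _ _)
  have bound : ∀ x, ‖f x‖ ≤ (K ∪ L).indicator (fun _ => C) x := by
    intro x
    by_cases hx : x ∈ symmDiff K L
    · have hxm := Set.mem_symmDiff.1 hx
      have hxU : x ∈ K ∪ L := by
        rcases hxm with ⟨h, _⟩ | ⟨h, _⟩; exacts [Or.inl h, Or.inr h]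
      have hxn : x ∉ K ∩ L := fun hmem => by
        rcases hxm with ⟨_, h⟩ | ⟨_, h⟩; exacts [h hmem.2, h hmem.1]
      have hεx : ε ≤ ‖x‖ := by
        by_contra h
        push_neg at h
        exact hxn (hball (mem_ball_zero_iff.2 h))
      have hxR : ‖x‖ ≤ R := mem_closedBall_zero_iff.1 (hR hxU)
      rw [hf, Set.indicator_of_mem hx, Set.indicator_of_mem hxU, Real.norm_eq_abs,
        abs_of_nonneg (Real.rpow_nonneg (norm_nonneg x) _)]
      exact rpow_le_max hε hεx hxR
    · rw [hf, Set.indicator_of_notMem hx, norm_zero]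
      exact Set.indicator_apply_nonneg (fun _ => hC)
  have hg_int : Integrable ((K ∪ L).indicator fun _ => C) volume :=
    (integrable_indicator_iff (hKm.union hLm)).2
      (integrableOn_const ((hKcp.union hLcp).measure_lt_top.ne))
  have hf_int : Integrable f volume :=
    Integrable.mono' hg_int hfmeas (Filter.Eventually.of_forall bound)
  have hu0 : ∀ u : Metric.sphere (0 : EuclideanSpace ℝ (Fin n)) 1,
      (u : EuclideanSpace ℝ (Fin n)) ≠ 0 := fun u => ne_of_mem_sphere u.2 one_ne_zero
  have hnorm : ∀ u : Metric.sphere (0 : EuclideanSpace ℝ (Fin n)) 1,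
      ‖(u : EuclideanSpace ℝ (Fin n))‖ = 1 := fun u => mem_sphere_zero_iff_norm.1 u.2
  set g : Metric.sphere (0 : EuclideanSpace ℝ (Fin n)) 1 × Set.Ioi (0:ℝ) → ℝ :=
    fun y => f ((y.2 : ℝ) • (y.1 : EuclideanSpace ℝ (Fin n))) with hg
  have hm0 : MeasurableSet ({0}ᶜ : Set (EuclideanSpace ℝ (Fin n))) :=
    (measurableSet_singleton 0).compl
  have hcomp : ∀ x : ({0}ᶜ : Set (EuclideanSpace ℝ (Fin n))),
      g (homeomorphUnitSphereProd (EuclideanSpace ℝ (Fin n)) x) = f x := by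
    intro x
    have hx0 : (x : EuclideanSpace ℝ (Fin n)) ≠ 0 := x.2
    show f (_ • _) = f x
    rw [homeomorphUnitSphereProd_apply_snd_coe, homeomorphUnitSphereProd_apply_fst_coe,
      smul_inv_smul₀ (norm_ne_zero_iff.2 hx0)]
  have hmp := (volume : Measure (EuclideanSpace ℝ (Fin n))).measurePreserving_homeomorphUnitSphereProd
  rw [hdim] at hmp
  have hint_comap : Integrable (fun x : ({0}ᶜ : Set (EuclideanSpace ℝ (Fin n))) => f x)
      (Measure.comap Subtype.val volume) := by
    have h2 := (MeasurableEmbedding.subtype_coe hm0).integrable_map_iff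
      (g := f) (μ := Measure.comap (Subtype.val : ({0}ᶜ : Set (EuclideanSpace ℝ (Fin n))) → _) volume)
    rw [(MeasurableEmbedding.subtype_coe hm0).map_comap, Subtype.range_coe] at h2
    exact h2.1 hf_int.integrableOn
  have hint_prod : Integrable g
      ((volume : Measure (EuclideanSpace ℝ (Fin n))).toSphere.prod
        (Measure.volumeIoiPow (n - 1))) := by
    refine (hmp.integrable_comp_emb (Homeomorph.measurableEmbedding _)).1 ?_
    have : g ∘ (homeomorphUnitSphereProd (EuclideanSpace ℝ (Fin n)))
        = fun x : ({0}ᶜ : Set (EuclideanSpace ℝ (Fin n))) => f x := funext hcomp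
    rw [this]
    exact hint_comap
  calc ∫ x in symmDiff K L, ‖x‖ ^ (q - (n:ℝ)) = ∫ x, f x := (integral_indicator hSDm).symm
    _ = ∫ x in ({0}ᶜ : Set (EuclideanSpace ℝ (Fin n))), f x := by
        rw [MeasureTheory.restrict_compl_singleton]
    _ = ∫ x : ({0}ᶜ : Set (EuclideanSpace ℝ (Fin n))), f x ∂(Measure.comap Subtype.val volume) :=
        (integral_subtype_comap hm0 f).symm
    _ = ∫ y, g y ∂((volume : Measure (EuclideanSpace ℝ (Fin n))).toSphere.prod
          (Measure.volumeIoiPow (n - 1))) := by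
        rw [← hmp.integral_comp (Homeomorph.measurableEmbedding _) g]
        exact integral_congr_ae (Filter.Eventually.of_forall fun x => (hcomp x).symm)
    _ = ∫ u : Metric.sphere (0 : EuclideanSpace ℝ (Fin n)) 1,
          (∫ r : Set.Ioi (0:ℝ), g (u, r) ∂(Measure.volumeIoiPow (n - 1)))
          ∂(volume : Measure (EuclideanSpace ℝ (Fin n))).toSphere :=
        integral_prod g hint_prod
    _ = ∫ u : Metric.sphere (0 : EuclideanSpace ℝ (Fin n)) 1,
          (max (radialFn K ↑u) (radialFn L ↑u) ^ q
            - min (radialFn K ↑u) (radialFn L ↑u) ^ q) / q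
          ∂(volume : Measure (EuclideanSpace ℝ (Fin n))).toSphere := by
        refine integral_congr_ae (Filter.Eventually.of_forall fun u => ?_)
        dsimp only
        have haK := radialFn_pos hKcp hKcv hKint (hu0 u)
        have haL := radialFn_pos hLcp hLcv hLint (hu0 u)
        have hmpos : 0 < min (radialFn K ↑u) (radialFn L ↑u) := lt_min haK haL
        have heq : ∀ r : Set.Ioi (0:ℝ), g (u, r)
            = (Set.Ioc (min (radialFn K ↑u) (radialFn L ↑u))
                (max (radialFn K ↑u) (radialFn L ↑u))).indicator
              (fun t : ℝ => t ^ (q - (n:ℝ))) (r : ℝ) := by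
          intro r
          have hr0 : (0:ℝ) < r := r.2
          have hiff := smul_mem_symmDiff_iff hKcp hKcv hKint hLcp hLcv hLint (hu0 u)
            (r := (r:ℝ)) hr0.le
          show f ((r:ℝ) • (u : EuclideanSpace ℝ (Fin n))) = _
          by_cases hmem : (r:ℝ) ∈ Set.Ioc (min (radialFn K ↑u) (radialFn L ↑u))
              (max (radialFn K ↑u) (radialFn L ↑u))
          · rw [hf, Set.indicator_of_mem (hiff.2 hmem), Set.indicator_of_mem hmem,
              norm_smul, hnorm u, mul_one, Real.norm_eq_abs, abs_of_pos hr0]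
          · rw [hf, Set.indicator_of_notMem (fun h => hmem (hiff.1 h)),
              Set.indicator_of_notMem hmem]
        rw [integral_congr_ae (Filter.Eventually.of_forall heq)]
        exact inner_integral (by omega) hmpos min_le_max hq
    _ = _ := integral_toSphere_eq n (by omega) _
end polar


/-- For convex bodies `K, L ⊆ ℝⁿ` (`n ≥ 2`) containing the origin in their interiors and
`0 < |q| ≤ n`:
`|Ṽ_q(K) + Ṽ_q(L) - 2Ṽ_q(K∩L)| = V_{|q|}(Dₙ) ∫_{S^{n-1}} |ρ_K^q - ρ_L^q| dσ`
`= (|q| V_{|q|}(Dₙ)/(n |Dₙ|)) ∫_{K △ L} ‖x‖^{q-n} dx`, and the dual volume deviation is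
nonnegative when `q > 0`. -/
theorem stmt4 {n : ℕ} (hn : 2 ≤ n)
    (K L : Set (EuclideanSpace ℝ (Fin n)))
    (hKcp : IsCompact K) (hKcv : Convex ℝ K) (hKint : 0 ∈ interior K)
    (hLcp : IsCompact L) (hLcv : Convex ℝ L) (hLint : 0 ∈ interior L)
    (q : ℝ) (hq0 : 0 < |q|) (hqn : |q| ≤ n) :
    |dualVol n q K + dualVol n q L - 2 * dualVol n q (K ∩ L)|
      = Vball n |q| * ∫ u : Metric.sphere (0 : EuclideanSpace ℝ (Fin n)) 1,
          |radialFn K ↑u ^ q - radialFn L ↑u ^ q| ∂(sphereProb n)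
    ∧ Vball n |q| * (∫ u : Metric.sphere (0 : EuclideanSpace ℝ (Fin n)) 1,
          |radialFn K ↑u ^ q - radialFn L ↑u ^ q| ∂(sphereProb n))
      = (|q| * Vball n |q| /
          ((n : ℝ) * (volume (Metric.closedBall (0 : EuclideanSpace ℝ (Fin n)) 1)).toReal)) *
          ∫ x in symmDiff K L, ‖x‖ ^ (q - (n : ℝ))
    ∧ (0 < q → 0 ≤ dualVol n q K + dualVol n q L - 2 * dualVol n q (K ∩ L)) := by
  haveI : NeZero n := ⟨by omega⟩
  have hq : q ≠ 0 := abs_pos.1 hq0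
  have hu0 : ∀ u : Metric.sphere (0 : EuclideanSpace ℝ (Fin n)) 1,
      (u : EuclideanSpace ℝ (Fin n)) ≠ 0 := fun u => ne_of_mem_sphere u.2 one_ne_zero
  have hKLcp : IsCompact (K ∩ L) := hKcp.inter_right hLcp.isClosed
  have hKLcv : Convex ℝ (K ∩ L) := hKcv.inter hLcv
  have hKLint : (0 : EuclideanSpace ℝ (Fin n)) ∈ interior (K ∩ L) := by
    rw [interior_inter]; exact ⟨hKint, hLint⟩
  have haK := fun u : Metric.sphere (0 : EuclideanSpace ℝ (Fin n)) 1 =>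
    radialFn_pos hKcp hKcv hKint (hu0 u)
  have haL := fun u : Metric.sphere (0 : EuclideanSpace ℝ (Fin n)) 1 =>
    radialFn_pos hLcp hLcv hLint (hu0 u)
  have IntK : Integrable (fun u : Metric.sphere (0 : EuclideanSpace ℝ (Fin n)) 1 =>
      radialFn K ↑u ^ q) (sphereProb n) :=
    integrable_sphereProb ((continuous_radialFn_sphere hKcp hKcv hKint).rpow_const
      fun u => Or.inl (haK u).ne')
  have IntL : Integrable (fun u : Metric.sphere (0 : EuclideanSpace ℝ (Fin n)) 1 =>
      radialFn L ↑u ^ q) (sphereProb n) :=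
    integrable_sphereProb ((continuous_radialFn_sphere hLcp hLcv hLint).rpow_const
      fun u => Or.inl (haL u).ne')
  have IntI : Integrable (fun u : Metric.sphere (0 : EuclideanSpace ℝ (Fin n)) 1 =>
      radialFn (K ∩ L) ↑u ^ q) (sphereProb n) :=
    integrable_sphereProb ((continuous_radialFn_sphere hKLcp hKLcv hKLint).rpow_const
      fun u => Or.inl (radialFn_pos hKLcp hKLcv hKLint (hu0 u)).ne')
  set s : ℝ := if 0 < q then 1 else -1 with hs
  set I : ℝ := ∫ u : Metric.sphere (0 : EuclideanSpace ℝ (Fin n)) 1,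
      |radialFn K ↑u ^ q - radialFn L ↑u ^ q| ∂(sphereProb n) with hI
  have hI0 : 0 ≤ I := integral_nonneg fun u => abs_nonneg _
  have hVpos : 0 < Vball n |q| := Vball_pos (abs_nonneg q) hqn
  have hpt : ∀ u : Metric.sphere (0 : EuclideanSpace ℝ (Fin n)) 1,
      radialFn K ↑u ^ q + radialFn L ↑u ^ q - 2 * radialFn (K ∩ L) ↑u ^ q
        = s * |radialFn K ↑u ^ q - radialFn L ↑u ^ q| := by
    intro u
    rw [radialFn_inter hKcp hKcv hKint hLcp hLcv hLint (hu0 u)]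
    exact pt_dev (haK u) (haL u) q
  have e1 : dualVol n q K + dualVol n q L - 2 * dualVol n q (K ∩ L) = Vball n |q| * (s * I) := by
    have hsum : ∫ u : Metric.sphere (0 : EuclideanSpace ℝ (Fin n)) 1,
        (radialFn K ↑u ^ q + radialFn L ↑u ^ q - 2 * radialFn (K ∩ L) ↑u ^ q)
        ∂(sphereProb n)
        = (∫ u : Metric.sphere (0 : EuclideanSpace ℝ (Fin n)) 1,
            radialFn K ↑u ^ q ∂(sphereProb n))
          + (∫ u : Metric.sphere (0 : EuclideanSpace ℝ (Fin n)) 1,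
            radialFn L ↑u ^ q ∂(sphereProb n))
          - 2 * ∫ u : Metric.sphere (0 : EuclideanSpace ℝ (Fin n)) 1,
            radialFn (K ∩ L) ↑u ^ q ∂(sphereProb n) := by
      calc ∫ u : Metric.sphere (0 : EuclideanSpace ℝ (Fin n)) 1,
            (radialFn K ↑u ^ q + radialFn L ↑u ^ q - 2 * radialFn (K ∩ L) ↑u ^ q)
            ∂(sphereProb n)
          = (∫ u : Metric.sphere (0 : EuclideanSpace ℝ (Fin n)) 1,
              (radialFn K ↑u ^ q + radialFn L ↑u ^ q) ∂(sphereProb n))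
            - ∫ u : Metric.sphere (0 : EuclideanSpace ℝ (Fin n)) 1,
              2 * radialFn (K ∩ L) ↑u ^ q ∂(sphereProb n) :=
          integral_sub (IntK.add IntL) (IntI.const_mul 2)
        _ = _ := by rw [integral_add IntK IntL, integral_const_mul]
    have hsum2 : ∫ u : Metric.sphere (0 : EuclideanSpace ℝ (Fin n)) 1,
        (radialFn K ↑u ^ q + radialFn L ↑u ^ q - 2 * radialFn (K ∩ L) ↑u ^ q)
        ∂(sphereProb n) = s * I := by
      rw [integral_congr_ae (Filter.Eventually.of_forall hpt), integral_const_mul]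
    rw [dualVol, dualVol, dualVol, ← hsum2, hsum]
    ring
  have habs : |s| = 1 := by
    rw [hs]; split_ifs <;> simp
  refine ⟨?_, ?_, ?_⟩
  · rw [e1, abs_mul, abs_mul, habs, abs_of_pos hVpos, abs_of_nonneg hI0]
    ring
  · have P := polar_symmDiff hn hKcp hKcv hKint hLcp hLcv hLint hq
    have hpt2 : ∀ u : Metric.sphere (0 : EuclideanSpace ℝ (Fin n)) 1,
        (max (radialFn K ↑u) (radialFn L ↑u) ^ q
          - min (radialFn K ↑u) (radialFn L ↑u) ^ q) / q
          = |radialFn K ↑u ^ q - radialFn L ↑u ^ q| / |q| :=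
      fun u => pt_sub (haK u) (haL u) hq
    rw [integral_congr_ae (Filter.Eventually.of_forall hpt2), integral_div] at P
    have hv : (0:ℝ) < (volume (ball (0 : EuclideanSpace ℝ (Fin n)) 1)).toReal :=
      ENNReal.toReal_pos (measure_ball_pos _ _ one_pos).ne' measure_ball_lt_top.ne
    have hn0 : ((n:ℝ)) ≠ 0 := Nat.cast_ne_zero.2 (by omega)
    rw [ball_closedBall_volume n, P]
    have hq0' : |q| ≠ 0 := hq0.ne'
    field_simp
    ring
  · intro hqpos
    rw [e1, hs, if_pos hqpos, one_mul]
    positivity
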